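/- With R̃ = [[R, m],[mᵀ, 1]] invertible (R symmetric positive definite, 1 - mᵀR⁻¹m ≠ 0) and d̃ = (d, 1), the vector R̃⁻¹d̃ equals (R⁻¹d + b₁(b₂-1)R⁻¹m, -b₁(b₂-1)) where b₁ = 1/(1 - mᵀR⁻¹m) and b₂ = mᵀR⁻¹d. -/

import Mathlib

open Matrix

theorem acem_direction_identity {L : ℕ} (R : Matrix (Fin L) (Fin L) ℝ)
    (m d : Fin L → ℝ) (hR : R.PosDef)
    (h1 : 1 - m ⬝ᵥ R⁻¹ *ᵥ m ≠ 0)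
    (hRt : IsUnit (fromBlocks R (fun i (_ : Fin 1) => m i) (fun (_ : Fin 1) j => m j) 1).det) :
    (fromBlocks R (fun i (_ : Fin 1) => m i) (fun (_ : Fin 1) j => m j) 1)⁻¹ *ᵥ
        Sum.elim d 1 =
      Sum.elim
        (R⁻¹ *ᵥ d + ((1 - m ⬝ᵥ R⁻¹ *ᵥ m)⁻¹ * (m ⬝ᵥ R⁻¹ *ᵥ d - 1)) • (R⁻¹ *ᵥ m))
        (fun _ => -((1 - m ⬝ᵥ R⁻¹ *ᵥ m)⁻¹ * (m ⬝ᵥ R⁻¹ *ᵥ d - 1))) := by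
  set c : ℝ := (1 - m ⬝ᵥ R⁻¹ *ᵥ m)⁻¹ * (m ⬝ᵥ R⁻¹ *ᵥ d - 1) with hc
  set A := fromBlocks R (fun i (_ : Fin 1) => m i) (fun (_ : Fin 1) j => m j)
      (1 : Matrix (Fin 1) (Fin 1) ℝ) with hA
  have hRinv : IsUnit R.det := hR.det_pos.ne'.isUnit
  have hRR : ∀ w : Fin L → ℝ, R *ᵥ (R⁻¹ *ᵥ w) = w := by
    intro w
    rw [mulVec_mulVec, mul_nonsing_inv _ hRinv, one_mulVec]
  have key : A *ᵥ Sum.elim (R⁻¹ *ᵥ d + c • (R⁻¹ *ᵥ m)) (fun _ => -c) = Sum.elim d 1 := by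
    rw [hA, fromBlocks_mulVec R (fun i (_ : Fin 1) => m i) (fun (_ : Fin 1) j => m j) 1,
      Sum.elim_comp_inl, Sum.elim_comp_inr]
    have e1 : R *ᵥ (R⁻¹ *ᵥ d + c • (R⁻¹ *ᵥ m)) +
        (fun i (_ : Fin 1) => m i) *ᵥ (fun _ => -c) = d := by
      rw [mulVec_add, mulVec_smul, hRR, hRR]
      funext i
      simp [mulVec, dotProduct, Fin.sum_univ_one]
      ring
    have e2 : (fun (_ : Fin 1) j => m j) *ᵥ (R⁻¹ *ᵥ d + c • (R⁻¹ *ᵥ m)) +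
        (1 : Matrix (Fin 1) (Fin 1) ℝ) *ᵥ (fun _ => -c) = 1 := by
      funext i
      show m ⬝ᵥ (R⁻¹ *ᵥ d + c • (R⁻¹ *ᵥ m)) +
          ((1 : Matrix (Fin 1) (Fin 1) ℝ) *ᵥ fun _ => -c) i = 1
      rw [one_mulVec, dotProduct_add, dotProduct_smul, smul_eq_mul, hc]
      generalize m ⬝ᵥ R⁻¹ *ᵥ d = t
      generalize hX : m ⬝ᵥ R⁻¹ *ᵥ m = s at h1 ⊢
      field_simp
      ring
    rw [e1, e2]
  calc A⁻¹ *ᵥ Sum.elim d 1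
      = A⁻¹ *ᵥ (A *ᵥ Sum.elim (R⁻¹ *ᵥ d + c • (R⁻¹ *ᵥ m)) (fun _ => -c)) := by rw [key]
    _ = _ := by rw [mulVec_mulVec, nonsing_inv_mul _ hRt, one_mulVec]
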